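/- Let d ≥ 2 and 0 < ℓ ≤ 1. Let e_1, …, e_d be an orthonormal basis of ℝ^d and let ā_1, …, ā_d ∈ ℝ^d be such that, with z_0 := (1/d)∑_{i=1}^d ā_i: ‖z_0‖ = 1; ⟨z_0, ā_i − z_0⟩ = 0 and ‖ā_i − z_0‖ = ℓ for all i; and ‖ā_i − ā_j‖ = ℓ·√(2d/(d−1)) for all i ≠ j (so ā_1,…,ā_d are the vertices of a regular simplex with center and unit normal z_0 and circumradius ℓ). Then the linear map T : ℝ^d → ℝ^d determined by T e_i = ā_i is invertible, and its inverse has operator norm ‖T^{-1}‖ ≤ 1/ℓ. -/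
import Mathlib

open RealInnerProductSpace

set_option maxHeartbeats 1000000 in
/-- Let `ā 1, …, ā d` be the vertices of a regular simplex in `ℝ^d` with center and unit
normal `z₀ = (1/d) ∑ ā i` and circumradius `ℓ ≤ 1`, and let `T` be the linear map sending
an orthonormal basis `e` to the `ā i`. Then `T` is invertible and `‖T⁻¹‖ ≤ 1/ℓ`. -/
theorem simplex_map_inverse_norm (d : ℕ) (hd : 2 ≤ d)
    (ℓ : ℝ) (hℓ0 : 0 < ℓ) (hℓ1 : ℓ ≤ 1)
    (e : OrthonormalBasis (Fin d) ℝ (EuclideanSpace ℝ (Fin d)))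
    (abar : Fin d → EuclideanSpace ℝ (Fin d))
    (z₀ : EuclideanSpace ℝ (Fin d)) (hz₀ : z₀ = (d : ℝ)⁻¹ • ∑ i, abar i)
    (hz₀n : ‖z₀‖ = 1)
    (horth : ∀ i, ⟪z₀, abar i - z₀⟫ = 0)
    (hrad : ∀ i, ‖abar i - z₀‖ = ℓ)
    (hpair : ∀ i j, i ≠ j → ‖abar i - abar j‖ = ℓ * Real.sqrt (2 * d / (d - 1)))
    (T : EuclideanSpace ℝ (Fin d) →L[ℝ] EuclideanSpace ℝ (Fin d))
    (hT : ∀ i, T (e i) = abar i) :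
    ∃ S : EuclideanSpace ℝ (Fin d) →L[ℝ] EuclideanSpace ℝ (Fin d),
      T.comp S = ContinuousLinearMap.id ℝ (EuclideanSpace ℝ (Fin d)) ∧
      S.comp T = ContinuousLinearMap.id ℝ (EuclideanSpace ℝ (Fin d)) ∧
      ‖S‖ ≤ 1 / ℓ := by
  have hd1 : (1 : ℝ) ≤ (d : ℝ) - 1 := by
    have : (2 : ℝ) ≤ (d : ℝ) := by exact_mod_cast hd
    linarith
  have hdne : (d : ℝ) - 1 ≠ 0 := by linarith
  set v : Fin d → EuclideanSpace ℝ (Fin d) := fun i => abar i - z₀ with hv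
  -- Gram matrix of v
  have hGdiag : ∀ i, ⟪v i, v i⟫ = ℓ ^ 2 := by
    intro i
    rw [real_inner_self_eq_norm_sq, hrad i]
  have hGoff : ∀ i j, i ≠ j → ⟪v i, v j⟫ = -ℓ ^ 2 / ((d : ℝ) - 1) := by
    intro i j hij
    have hvd : v i - v j = abar i - abar j := by simp [hv]
    have h1 : ‖v i - v j‖ ^ 2 = ‖v i‖ ^ 2 - 2 * ⟪v i, v j⟫ + ‖v j‖ ^ 2 := by
      rw [norm_sub_sq_real]
    have h2 : ‖v i - v j‖ ^ 2 = ℓ ^ 2 * (2 * d / ((d : ℝ) - 1)) := by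
      rw [hvd, hpair i j hij, mul_pow, Real.sq_sqrt]
      positivity
    rw [hrad i, hrad j] at h1
    rw [h1] at h2
    field_simp at h2 ⊢
    nlinarith [h2]
  have key : ∀ x : EuclideanSpace ℝ (Fin d), ℓ * ‖x‖ ≤ ‖T x‖ := by
    intro x
    set c : Fin d → ℝ := fun i => e.repr x i with hc
    have hx : x = ∑ i, c i • e i := (e.sum_repr x).symm
    have hTx : T x = (∑ i, c i) • z₀ + ∑ i, c i • v i := by
      rw [hx, map_sum]
      simp only [map_smul, hT, Finset.sum_smul]
      rw [← Finset.sum_add_distrib]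
      refine Finset.sum_congr rfl fun i _ => ?_
      rw [hv, smul_sub]
      abel
    have hq : ‖x‖ ^ 2 = ∑ i, c i ^ 2 := by
      have h1 : ‖x‖ = ‖e.repr x‖ := (e.repr.norm_map x).symm
      rw [h1, EuclideanSpace.norm_eq, Real.sq_sqrt (by positivity)]
      simp [hc, sq_abs]
    set s : ℝ := ∑ i, c i with hs
    set w : EuclideanSpace ℝ (Fin d) := ∑ i, c i • v i with hw
    have hzw : ⟪z₀, w⟫ = 0 := by
      rw [hw, inner_sum]
      simp only [real_inner_smul_right]
      exact Finset.sum_eq_zero fun i _ => by rw [horth i]; ring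
    have hnTx : ‖T x‖ ^ 2 = s ^ 2 + ‖w‖ ^ 2 := by
      rw [hTx, norm_add_sq_real, real_inner_smul_left, hzw, norm_smul, hz₀n]
      simp [abs_sq, mul_pow, sq_abs]
    have hww : ‖w‖ ^ 2 = ∑ i, ∑ j, c i * c j * ⟪v i, v j⟫ := by
      rw [← real_inner_self_eq_norm_sq, hw, sum_inner]
      congr 1; ext i
      rw [real_inner_smul_left, inner_sum, Finset.mul_sum]
      congr 1; ext j
      rw [real_inner_smul_right]; ring
    have hsum : ∑ i, ∑ j, c i * c j * ⟪v i, v j⟫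
        = (-ℓ ^ 2 / ((d : ℝ) - 1)) * s ^ 2 + (ℓ ^ 2 + ℓ ^ 2 / ((d : ℝ) - 1)) * ∑ i, c i ^ 2 := by
      have hterm : ∀ i j, c i * c j * ⟪v i, v j⟫
          = c i * c j * (-ℓ ^ 2 / ((d : ℝ) - 1))
            + (if j = i then c i ^ 2 * (ℓ ^ 2 + ℓ ^ 2 / ((d : ℝ) - 1)) else 0) := by
        intro i j
        by_cases h : j = i
        · subst h; rw [hGdiag]; simp; ring
        · rw [hGoff i j (Ne.symm h), if_neg h]; ring
      have h1 : (∑ i : Fin d, ∑ j : Fin d, c i * c j * (-ℓ ^ 2 / ((d : ℝ) - 1)))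
          = s * s * (-ℓ ^ 2 / ((d : ℝ) - 1)) := by
        simp_rw [← Finset.sum_mul, ← Finset.mul_sum]
        rw [hs, ← Finset.sum_mul]
      simp only [hterm, Finset.sum_add_distrib, Finset.sum_ite_eq', Finset.mem_univ, if_pos, h1]
      rw [← Finset.sum_mul]
      ring
    have hq0 : (0:ℝ) ≤ ∑ i, c i ^ 2 := Finset.sum_nonneg fun i _ => sq_nonneg _
    have hfinal : (ℓ * ‖x‖) ^ 2 ≤ ‖T x‖ ^ 2 := by
      rw [mul_pow, hq, hnTx, hww, hsum]
      have hℓsq : ℓ ^ 2 ≤ 1 := by nlinarith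
      have h1 : 0 ≤ s ^ 2 * (1 - ℓ ^ 2 / ((d : ℝ) - 1)) := by
        apply mul_nonneg (sq_nonneg _)
        rw [sub_nonneg, div_le_one (by linarith)]
        linarith
      have h2 : 0 ≤ (ℓ ^ 2 / ((d : ℝ) - 1)) * ∑ i, c i ^ 2 := by positivity
      have expand : s ^ 2 + ((-ℓ ^ 2 / ((d : ℝ) - 1)) * s ^ 2
          + (ℓ ^ 2 + ℓ ^ 2 / ((d : ℝ) - 1)) * ∑ i, c i ^ 2)
          = ℓ ^ 2 * (∑ i, c i ^ 2) + (s ^ 2 * (1 - ℓ ^ 2 / ((d : ℝ) - 1))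
            + (ℓ ^ 2 / ((d : ℝ) - 1)) * ∑ i, c i ^ 2) := by ring
      rw [expand]
      linarith
    nlinarith [norm_nonneg (T x), norm_nonneg x, mul_nonneg hℓ0.le (norm_nonneg x)]
  -- injectivity and bijectivity
  have hinj : Function.Injective T := by
    intro a b hab
    have h := key (a - b)
    rw [map_sub, hab, sub_self, norm_zero] at h
    have h1 : ‖a - b‖ ≤ 0 := by nlinarith [norm_nonneg (a - b)]
    have h2 : a - b = 0 := norm_eq_zero.mp (le_antisymm h1 (norm_nonneg _))
    exact sub_eq_zero.mp h2
  have hinj' : Function.Injective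
      (T : EuclideanSpace ℝ (Fin d) →ₗ[ℝ] EuclideanSpace ℝ (Fin d)) := by
    simpa using hinj
  have hsurj : Function.Surjective
      (T : EuclideanSpace ℝ (Fin d) →ₗ[ℝ] EuclideanSpace ℝ (Fin d)) :=
    LinearMap.injective_iff_surjective.mp hinj'
  let E : EuclideanSpace ℝ (Fin d) ≃ₗ[ℝ] EuclideanSpace ℝ (Fin d) :=
    LinearEquiv.ofBijective (T : EuclideanSpace ℝ (Fin d) →ₗ[ℝ] EuclideanSpace ℝ (Fin d))
      ⟨hinj', hsurj⟩
  let S : EuclideanSpace ℝ (Fin d) →L[ℝ] EuclideanSpace ℝ (Fin d) :=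
    LinearMap.toContinuousLinearMap (E.symm : EuclideanSpace ℝ (Fin d) →ₗ[ℝ] EuclideanSpace ℝ (Fin d))
  have hSy : ∀ y, T (S y) = y := by
    intro y
    show (T : EuclideanSpace ℝ (Fin d) →ₗ[ℝ] EuclideanSpace ℝ (Fin d)) (E.symm y) = y
    exact E.apply_symm_apply y
  refine ⟨S, ?_, ?_, ?_⟩
  · refine ContinuousLinearMap.ext fun y => ?_
    simpa using hSy y
  · refine ContinuousLinearMap.ext fun y => ?_
    apply hinj
    simpa using hSy (T y)
  · apply ContinuousLinearMap.opNorm_le_bound _ (by positivity)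
    intro y
    have h := key (S y)
    rw [hSy y] at h
    rw [div_mul_eq_mul_div, le_div_iff₀ hℓ0]
    linarith
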